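/- Let 0 ≤ a < 1, 0 ≤ b < 1 and 0 < κ < λ. Then there exists a constant C > 0, depending only on a, b, κ and λ, such that for every t > 0: ∫₀ᵗ (t−s)^{−a} e^{−λ(t−s)} (min{s,1})^{−b} e^{−κ s} ds ≤ C (min{t,1})^{1−a−b} e^{−κ t}. -/

import Mathlib

open MeasureTheory

open MeasureTheory Set

lemma integrableOn_rpow_Ioc' {c x : ℝ} (hc1 : c < 1) (hx0 : 0 ≤ x) :
    IntegrableOn (fun s : ℝ => s ^ (-c)) (Set.Ioc 0 x) := by
  have h := intervalIntegral.intervalIntegrable_rpow' (a := 0) (b := x) (r := -c)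
    (by linarith)
  rwa [intervalIntegrable_iff_integrableOn_Ioc_of_le hx0] at h

lemma int_rpow_Ioc' {c x : ℝ} (hc1 : c < 1) (hx : 0 < x) :
    ∫ s in Set.Ioc (0:ℝ) x, s ^ (-c) = x ^ (1 - c) / (1 - c) := by
  rw [← intervalIntegral.integral_of_le hx.le,
    integral_rpow (Or.inl (by linarith)),
    Real.zero_rpow (by intro h; linarith)]
  rw [show -c + 1 = 1 - c by ring]
  ring

lemma integrableOn_refl_rpow' {c t p : ℝ} (hc1 : c < 1) (hpt : p ≤ t) :
    IntegrableOn (fun s : ℝ => (t - s) ^ (-c)) (Set.Ioc p t) := by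
  have h := (intervalIntegral.intervalIntegrable_rpow' (a := 0) (b := t - p) (r := -c)
    (by linarith)).comp_sub_left t
  simp only [sub_zero, sub_sub_cancel] at h
  have h2 := h.symm
  rwa [intervalIntegrable_iff_integrableOn_Ioc_of_le hpt] at h2

lemma int_refl_rpow' {c t p : ℝ} (hc1 : c < 1) (hpt : p < t) :
    ∫ s in Set.Ioc p t, (t - s) ^ (-c) = (t - p) ^ (1 - c) / (1 - c) := by
  rw [← intervalIntegral.integral_of_le hpt.le,
    intervalIntegral.integral_comp_sub_left (fun u : ℝ => u ^ (-c)) t,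
    sub_self,
    integral_rpow (Or.inl (by linarith)),
    Real.zero_rpow (by intro h; linarith)]
  rw [show -c + 1 = 1 - c by ring]
  ring

lemma int_exp_Ioc' {μ t p q : ℝ} (hμ : 0 < μ) (hpq : p ≤ q) :
    ∫ s in Set.Ioc p q, Real.exp (-μ * (t - s)) ≤ Real.exp (-μ * (t - q)) / μ := by
  rw [← intervalIntegral.integral_of_le hpq,
    intervalIntegral.integral_comp_sub_left (fun u : ℝ => Real.exp (-μ * u)) t,
    intervalIntegral.integral_comp_mul_left Real.exp (by linarith : -μ ≠ 0),
    integral_exp, smul_eq_mul]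
  have h1 : Real.exp (-μ * (t - q)) - Real.exp (-μ * (t - p)) ≤ Real.exp (-μ * (t - q)) := by
    nlinarith [Real.exp_pos (-μ * (t - p))]
  calc (-μ)⁻¹ * (Real.exp (-μ * (t - p)) - Real.exp (-μ * (t - q)))
      = (Real.exp (-μ * (t - q)) - Real.exp (-μ * (t - p))) / μ := by
        field_simp
        ring
    _ ≤ Real.exp (-μ * (t - q)) / μ := (div_le_div_iff_of_pos_right hμ).mpr h1

open MeasureTheory Set

lemma piece_bound' {g D : ℝ → ℝ} {S : Set ℝ} (hS : MeasurableSet S)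
    (hgm : Measurable g) (hD : IntegrableOn D S)
    (h0 : ∀ s ∈ S, 0 ≤ g s) (h1 : ∀ s ∈ S, g s ≤ D s) :
    IntegrableOn g S ∧ ∫ s in S, g s ≤ ∫ s in S, D s := by
  have hgi : IntegrableOn g S := by
    apply Integrable.mono' hD hgm.aestronglyMeasurable.restrict
    filter_upwards [ae_restrict_mem hS] with s hs
    rw [Real.norm_eq_abs, abs_of_nonneg (h0 s hs)]
    exact h1 s hs
  exact ⟨hgi, setIntegral_mono_on hgi hD hS h1⟩

set_option maxHeartbeats 1000000 in
lemma Jbound' (a b μ : ℝ) (ha0 : 0 ≤ a) (ha1 : a < 1) (hb0 : 0 ≤ b) (hb1 : b < 1)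
    (hμ : 0 < μ) {t : ℝ} (ht : 0 < t) :
    ∫ s in Set.Ioo (0:ℝ) t, (t - s) ^ (-a) * Real.exp (-μ * (t - s)) * (min s 1) ^ (-b)
      ≤ (8 * (1/(1-a) + 1/(1-b) + 1/μ)) * (min t 1) ^ (1 - a - b) := by
  have h1a : 0 < 1 - a := by linarith
  have h1b : 0 < 1 - b := by linarith
  set g : ℝ → ℝ := fun s => (t - s) ^ (-a) * Real.exp (-μ * (t - s)) * (min s 1) ^ (-b)
    with hgdef
  have hgm : Measurable g := by
    rw [hgdef]; fun_prop
  have hg0 : ∀ s : ℝ, 0 ≤ s → s ≤ t → 0 ≤ g s := by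
    intro s h1 h2
    exact mul_nonneg (mul_nonneg (Real.rpow_nonneg (by linarith) _) (Real.exp_nonneg _))
      (Real.rpow_nonneg (le_min h1 zero_le_one) _)
  have hX : (0:ℝ) < 1/(1-a) := by positivity
  have hY : (0:ℝ) < 1/(1-b) := by positivity
  have hZ : (0:ℝ) < 1/μ := by positivity
  rcases le_or_gt t 2 with ht2 | ht2
  · -- case t ≤ 2
    have hth : 0 < t/2 := by linarith
    have ht2' : t/2 ≤ 1 := by linarith
    set m : ℝ := min t 1 with hmdef
    have hm0 : 0 < m := lt_min ht one_pos
    have hmt : t/2 ≤ m := le_min (by linarith) ht2'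
    have hmt2 : m ≤ t := min_le_left _ _
    have hP1 := piece_bound' (g := g) (D := fun s => (t/2) ^ (-a) * s ^ (-b))
      (S := Set.Ioc 0 (t/2)) measurableSet_Ioc hgm
      ((integrableOn_rpow_Ioc' hb1 hth.le).const_mul _)
      (fun s hs => hg0 s hs.1.le (by linarith [hs.2]))
      (by
        intro s hs
        have hs1 : 0 < s := hs.1
        have hs2 : s ≤ t/2 := hs.2
        have hA : (t - s) ^ (-a) ≤ (t/2) ^ (-a) :=
          Real.rpow_le_rpow_of_nonpos hth (by linarith) (by linarith)
        have hB : Real.exp (-μ * (t - s)) ≤ 1 :=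
          Real.exp_le_one_iff.mpr (by nlinarith)
        have hC : (min s 1 : ℝ) ^ (-b) = s ^ (-b) := by
          rw [min_eq_left (by linarith : s ≤ 1)]
        show (t - s) ^ (-a) * Real.exp (-μ * (t - s)) * (min s 1) ^ (-b) ≤ _
        rw [hC]
        have h1 : (t - s) ^ (-a) * Real.exp (-μ * (t - s)) ≤ (t/2) ^ (-a) :=
          (mul_le_of_le_one_right (Real.rpow_nonneg (by linarith) _) hB).trans hA
        exact mul_le_mul_of_nonneg_right h1 (Real.rpow_nonneg hs1.le _))
    have hP2 := piece_bound' (g := g) (D := fun s => (t/2) ^ (-b) * (t - s) ^ (-a))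
      (S := Set.Ioo (t/2) t) measurableSet_Ioo hgm
      (MeasureTheory.IntegrableOn.mono_set
        ((integrableOn_refl_rpow' ha1 (by linarith : t/2 ≤ t)).const_mul ((t/2) ^ (-b)))
        Set.Ioo_subset_Ioc_self)
      (fun s hs => hg0 s (by linarith [hs.1]) hs.2.le)
      (by
        intro s hs
        have hs1 : t/2 < s := hs.1
        have hs2 : s < t := hs.2
        have hA0 : (0:ℝ) ≤ (t - s) ^ (-a) := Real.rpow_nonneg (by linarith) _
        have hB : Real.exp (-μ * (t - s)) ≤ 1 :=
          Real.exp_le_one_iff.mpr (by nlinarith)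
        have hC : (min s 1 : ℝ) ^ (-b) ≤ (t/2) ^ (-b) :=
          Real.rpow_le_rpow_of_nonpos hth (le_min hs1.le ht2') (by linarith)
        show (t - s) ^ (-a) * Real.exp (-μ * (t - s)) * (min s 1) ^ (-b) ≤ _
        calc (t - s) ^ (-a) * Real.exp (-μ * (t - s)) * (min s 1) ^ (-b)
            ≤ (t - s) ^ (-a) * (t/2) ^ (-b) := by
              apply mul_le_mul _ hC (Real.rpow_nonneg (le_min (by linarith) zero_le_one) _) hA0
              exact mul_le_of_le_one_right hA0 hB
          _ = (t/2) ^ (-b) * (t - s) ^ (-a) := by ring)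
    have hsplit : Set.Ioo (0:ℝ) t = Set.Ioc 0 (t/2) ∪ Set.Ioo (t/2) t :=
      (Set.Ioc_union_Ioo_eq_Ioo hth.le (by linarith)).symm
    have hdisj : Disjoint (Set.Ioc (0:ℝ) (t/2)) (Set.Ioo (t/2) t) := by
      rw [Set.disjoint_left]
      rintro x ⟨_, h2⟩ ⟨h3, _⟩
      linarith
    rw [hsplit, setIntegral_union hdisj measurableSet_Ioo hP1.1 hP2.1]
    have hI1 : ∫ s in Set.Ioc (0:ℝ) (t/2), (t/2) ^ (-a) * s ^ (-b)
        = (t/2) ^ (-a) * ((t/2) ^ (1-b) / (1-b)) := by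
      rw [MeasureTheory.integral_const_mul _ _, int_rpow_Ioc' hb1 hth]
    have hI2 : ∫ s in Set.Ioo (t/2) t, (t/2) ^ (-b) * (t - s) ^ (-a)
        = (t/2) ^ (-b) * ((t - t/2) ^ (1-a) / (1-a)) := by
      rw [← integral_Ioc_eq_integral_Ioo, MeasureTheory.integral_const_mul _ _, int_refl_rpow' ha1 (by linarith)]
    have htt : t - t/2 = t/2 := by ring
    rw [htt] at hI2
    have hpow1 : (t/2) ^ (-a) * (t/2) ^ (1-b) = (t/2) ^ (1-a-b) := by
      rw [← Real.rpow_add hth]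
      ring_nf
    have hpow2 : (t/2) ^ (-b) * (t/2) ^ (1-a) = (t/2) ^ (1-a-b) := by
      rw [← Real.rpow_add hth]
      ring_nf
    have hkey : (t/2) ^ (1-a-b) ≤ 4 * m ^ (1-a-b) := by
      have hme : (0:ℝ) ≤ m ^ (1-a-b) := Real.rpow_nonneg hm0.le _
      rcases le_or_gt 0 (1-a-b) with he | he
      · have := Real.rpow_le_rpow hth.le hmt he
        linarith
      · have h2 : m/2 ≤ t/2 := by linarith
        have h5 : (t/2:ℝ) ^ (1-a-b) ≤ (m/2) ^ (1-a-b) :=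
          Real.rpow_le_rpow_of_nonpos (by positivity) h2 he.le
        have h3 : (m/2 : ℝ) ^ (1-a-b) = m ^ (1-a-b) * (2:ℝ) ^ (-(1-a-b)) := by
          rw [div_eq_mul_inv, Real.mul_rpow hm0.le (by norm_num : (0:ℝ) ≤ 2⁻¹),
            Real.inv_rpow (by norm_num : (0:ℝ) ≤ 2), ← Real.rpow_neg (by norm_num : (0:ℝ) ≤ 2)]
        have h4 : (2:ℝ) ^ (-(1-a-b)) ≤ 4 := by
          calc (2:ℝ) ^ (-(1-a-b)) ≤ (2:ℝ) ^ (1:ℝ) :=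
                Real.rpow_le_rpow_of_exponent_le (by norm_num) (by linarith)
            _ = 2 := Real.rpow_one 2
            _ ≤ 4 := by norm_num
        nlinarith
    have hfin1 := hP1.2.trans hI1.le
    have hfin2 := hP2.2.trans hI2.le
    have hme : (0:ℝ) ≤ m ^ (1-a-b) := Real.rpow_nonneg hm0.le _
    calc (∫ s in Set.Ioc (0:ℝ) (t/2), g s) + ∫ s in Set.Ioo (t/2) t, g s
        ≤ (t/2) ^ (-a) * ((t/2) ^ (1-b) / (1-b)) + (t/2) ^ (-b) * ((t/2) ^ (1-a) / (1-a)) := by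
          linarith
      _ = (t/2) ^ (-a) * (t/2) ^ (1-b) * (1/(1-b)) + (t/2) ^ (-b) * (t/2) ^ (1-a) * (1/(1-a)) := by
          ring
      _ = (t/2) ^ (1-a-b) * (1/(1-b)) + (t/2) ^ (1-a-b) * (1/(1-a)) := by
          rw [hpow1, hpow2]
      _ ≤ (4 * m ^ (1-a-b)) * (1/(1-b)) + (4 * m ^ (1-a-b)) * (1/(1-a)) := by
          have k1 := mul_le_mul_of_nonneg_right hkey hY.le
          have k2 := mul_le_mul_of_nonneg_right hkey hX.le
          linarith
      _ = (4 * (1/(1-b)) + 4 * (1/(1-a))) * m ^ (1-a-b) := by ring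
      _ ≤ (8 * (1/(1-a) + 1/(1-b) + 1/μ)) * m ^ (1-a-b) := by
          apply mul_le_mul_of_nonneg_right _ hme
          linarith
  · -- case t > 2
    have hm1 : min t 1 = 1 := min_eq_right (by linarith)
    rw [hm1, Real.one_rpow]
    have hP1 := piece_bound' (g := g) (D := fun s : ℝ => s ^ (-b))
      (S := Set.Ioc 0 1) measurableSet_Ioc hgm
      (integrableOn_rpow_Ioc' hb1 zero_le_one)
      (fun s hs => hg0 s hs.1.le (by linarith [hs.2]))
      (by
        intro s hs
        have hs1 : 0 < s := hs.1
        have hs2 : s ≤ 1 := hs.2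
        have hA : (t - s) ^ (-a) ≤ 1 :=
          Real.rpow_le_one_of_one_le_of_nonpos (by linarith) (by linarith)
        have hB : Real.exp (-μ * (t - s)) ≤ 1 :=
          Real.exp_le_one_iff.mpr (by nlinarith)
        have hC : (min s 1 : ℝ) ^ (-b) = s ^ (-b) := by rw [min_eq_left hs2]
        show (t - s) ^ (-a) * Real.exp (-μ * (t - s)) * (min s 1) ^ (-b) ≤ _
        rw [hC]
        have h1 : (t - s) ^ (-a) * Real.exp (-μ * (t - s)) ≤ 1 :=
          mul_le_one₀ hA (Real.exp_nonneg _) hB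
        exact mul_le_of_le_one_left (Real.rpow_nonneg hs1.le _) h1)
    have hP2 := piece_bound' (g := g) (D := fun s : ℝ => Real.exp (-μ * (t - s)))
      (S := Set.Ioc 1 (t-1)) measurableSet_Ioc hgm
      ((Real.continuous_exp.comp ((continuous_const.mul (continuous_const.sub continuous_id) : Continuous fun s : ℝ => -μ * (t - s)))).integrableOn_Ioc)
      (fun s hs => hg0 s (by linarith [hs.1]) (by linarith [hs.2]))
      (by
        intro s hs
        have hs1 : 1 < s := hs.1
        have hs2 : s ≤ t - 1 := hs.2
        have hA : (t - s) ^ (-a) ≤ 1 :=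
          Real.rpow_le_one_of_one_le_of_nonpos (by linarith) (by linarith)
        have hC : (min s 1 : ℝ) ^ (-b) = 1 := by
          rw [min_eq_right hs1.le, Real.one_rpow]
        show (t - s) ^ (-a) * Real.exp (-μ * (t - s)) * (min s 1) ^ (-b) ≤ _
        rw [hC, mul_one]
        exact mul_le_of_le_one_left (Real.exp_nonneg _) hA)
    have hP3 := piece_bound' (g := g) (D := fun s : ℝ => (t - s) ^ (-a))
      (S := Set.Ioo (t-1) t) measurableSet_Ioo hgm
      (MeasureTheory.IntegrableOn.mono_set
        (integrableOn_refl_rpow' ha1 (by linarith : t - 1 ≤ t)) Set.Ioo_subset_Ioc_self)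
      (fun s hs => hg0 s (by linarith [hs.1]) hs.2.le)
      (by
        intro s hs
        have hs1 : t - 1 < s := hs.1
        have hs2 : s < t := hs.2
        have hB : Real.exp (-μ * (t - s)) ≤ 1 :=
          Real.exp_le_one_iff.mpr (by nlinarith)
        have hC : (min s 1 : ℝ) ^ (-b) = 1 := by
          rw [min_eq_right (by linarith), Real.one_rpow]
        show (t - s) ^ (-a) * Real.exp (-μ * (t - s)) * (min s 1) ^ (-b) ≤ _
        rw [hC, mul_one]
        exact mul_le_of_le_one_right (Real.rpow_nonneg (by linarith) _) hB)
    have hu2 : Set.Ioc (0:ℝ) (t-1) = Set.Ioc 0 1 ∪ Set.Ioc 1 (t-1) :=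
      (Set.Ioc_union_Ioc_eq_Ioc (by linarith) (by linarith)).symm
    have hu1 : Set.Ioo (0:ℝ) t = (Set.Ioc 0 1 ∪ Set.Ioc 1 (t-1)) ∪ Set.Ioo (t-1) t := by
      rw [← hu2]
      exact (Set.Ioc_union_Ioo_eq_Ioo (by linarith) (by linarith)).symm
    have hd1 : Disjoint (Set.Ioc (0:ℝ) 1) (Set.Ioc 1 (t-1)) := by
      rw [Set.disjoint_left]; rintro x ⟨_, h2⟩ ⟨h3, _⟩; linarith
    have hd2 : Disjoint (Set.Ioc (0:ℝ) 1 ∪ Set.Ioc 1 (t-1)) (Set.Ioo (t-1) t) := by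
      rw [Set.disjoint_left]
      rintro x (⟨_, h2⟩ | ⟨_, h2⟩) ⟨h3, _⟩ <;> linarith
    rw [hu1, setIntegral_union hd2 measurableSet_Ioo (hP1.1.union hP2.1) hP3.1,
      setIntegral_union hd1 measurableSet_Ioc hP1.1 hP2.1]
    have hI1 : ∫ s in Set.Ioc (0:ℝ) 1, s ^ (-b) = 1 / (1-b) := by
      rw [int_rpow_Ioc' hb1 one_pos, Real.one_rpow]
    have hI2 : ∫ s in Set.Ioc (1:ℝ) (t-1), Real.exp (-μ * (t - s)) ≤ 1/μ := by
      refine (int_exp_Ioc' hμ (by linarith)).trans ?_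
      have h : Real.exp (-μ * (t - (t-1))) ≤ 1 := Real.exp_le_one_iff.mpr (by nlinarith)
      calc Real.exp (-μ * (t - (t-1))) / μ ≤ 1 / μ :=
            (div_le_div_iff_of_pos_right hμ).mpr h
        _ = 1/μ := rfl
    have hI3 : ∫ s in Set.Ioo (t-1) t, (t - s) ^ (-a) = (t - (t-1)) ^ (1-a) / (1-a) := by
      rw [← integral_Ioc_eq_integral_Ioo, int_refl_rpow' ha1 (by linarith)]
    have htt : t - (t-1) = 1 := by ring
    rw [htt, Real.one_rpow] at hI3
    have hf1 := hP1.2.trans hI1.le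
    have hf2 := hP2.2.trans hI2
    have hf3 := hP3.2.trans hI3.le
    rw [mul_one]
    linarith

open MeasureTheory

/-- Weighted convolution estimate with exponential decay: a weakly singular kernel
`(t-s)^{-a} e^{-λ(t-s)}` convolved against the decaying weight `min{s,1}^{-b} e^{-κ s}`. -/
theorem convolution_min_weight_decay_estimate
    (a b κ lam : ℝ) (ha0 : 0 ≤ a) (ha1 : a < 1) (hb0 : 0 ≤ b) (hb1 : b < 1)
    (hκ : 0 < κ) (hκlam : κ < lam) :
    ∃ C > 0, ∀ t : ℝ, 0 < t →
      (∫ s in Set.Ioo (0:ℝ) t,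
          (t - s) ^ (-a) * Real.exp (-lam * (t - s)) * (min s 1) ^ (-b) * Real.exp (-κ * s))
        ≤ C * (min t 1) ^ (1 - a - b) * Real.exp (-κ * t) := by
  have hμ : 0 < lam - κ := by linarith
  have h1a : 0 < 1 - a := by linarith
  have h1b : 0 < 1 - b := by linarith
  have hx : (0:ℝ) < 1/(1-a) := one_div_pos.mpr h1a
  have hy : (0:ℝ) < 1/(1-b) := one_div_pos.mpr h1b
  have hz : (0:ℝ) < 1/(lam-κ) := one_div_pos.mpr hμ
  refine ⟨8 * (1/(1-a) + 1/(1-b) + 1/(lam-κ)), by linarith, ?_⟩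
  intro t ht
  have hF : ∀ s : ℝ,
      (t - s) ^ (-a) * Real.exp (-lam * (t - s)) * (min s 1) ^ (-b) * Real.exp (-κ * s)
      = Real.exp (-κ * t)
          * ((t - s) ^ (-a) * Real.exp (-(lam - κ) * (t - s)) * (min s 1) ^ (-b)) := by
    intro s
    have he : Real.exp (-lam * (t - s)) * Real.exp (-κ * s)
        = Real.exp (-κ * t) * Real.exp (-(lam - κ) * (t - s)) := by
      rw [← Real.exp_add, ← Real.exp_add]
      congr 1
      ring
    calc (t - s) ^ (-a) * Real.exp (-lam * (t - s)) * (min s 1) ^ (-b) * Real.exp (-κ * s)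
        = (t - s) ^ (-a) * (min s 1) ^ (-b) * (Real.exp (-lam * (t - s)) * Real.exp (-κ * s)) := by
          ring
      _ = (t - s) ^ (-a) * (min s 1) ^ (-b)
            * (Real.exp (-κ * t) * Real.exp (-(lam - κ) * (t - s))) := by rw [he]
      _ = Real.exp (-κ * t)
            * ((t - s) ^ (-a) * Real.exp (-(lam - κ) * (t - s)) * (min s 1) ^ (-b)) := by ring
  simp only [hF]
  rw [MeasureTheory.integral_const_mul]
  rw [show 8 * (1/(1-a) + 1/(1-b) + 1/(lam-κ)) * (min t 1) ^ (1 - a - b) * Real.exp (-κ * t)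
      = Real.exp (-κ * t) * ((8 * (1/(1-a) + 1/(1-b) + 1/(lam-κ))) * (min t 1) ^ (1 - a - b)) by
        ring]
  exact mul_le_mul_of_nonneg_left
    (Jbound' a b (lam - κ) ha0 ha1 hb0 hb1 hμ ht) (Real.exp_nonneg _)
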